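/- T¹ norm of an atom is at most one (Hilbert-valued case). Let H be a separable Hilbert space and let a : ℝⁿ × (0,∞) → H be strongly measurable, vanishing outside the tent B̂ over some open ball B ⊆ ℝⁿ, and satisfying ∫_B ∫_{Γ(x)} ‖a(y,t)‖² dμ(y,t) dx ≤ 1/|B|. Then ∫_{ℝⁿ} ( ∫_{Γ(x)} ‖a(y,t)‖² dμ(y,t) )^{1/2} dx ≤ 1. (In particular, ∫_{Γ(x)} ‖a‖² dμ = 0 for almost every x outside B.) -/

import Mathlib

open MeasureTheory ENNReal Metric Set

noncomputable section

/-- The cone `Γ(x) = {(y,t) : ‖x - y‖ < t}` in the upper half-space. -/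
def cone (n : ℕ) (x : EuclideanSpace ℝ (Fin n)) : Set (EuclideanSpace ℝ (Fin n) × ℝ) :=
  {p | dist x p.1 < p.2}

/-- The tent `Ê = {(y,t) : t > 0, B(y,t) ⊆ E}` over a set `E ⊆ ℝⁿ`. -/
def tent (n : ℕ) (E : Set (EuclideanSpace ℝ (Fin n))) : Set (EuclideanSpace ℝ (Fin n) × ℝ) :=
  {p | 0 < p.2 ∧ Metric.ball p.1 p.2 ⊆ E}

/-- The measure `dμ(y,t) = dy dt / t^(n+1)` on the upper half-space. -/
def muT (n : ℕ) : Measure (EuclideanSpace ℝ (Fin n) × ℝ) :=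
  (volume.restrict {p : EuclideanSpace ℝ (Fin n) × ℝ | 0 < p.2}).withDensity
    fun p => ENNReal.ofReal (p.2 ^ (-(n + 1 : ℝ)))

/-- The `T¹(H)` norm of an atom is at most one (Hilbert-valued case). -/
theorem atom_norm_le_one (n : ℕ) (H : Type*) [NormedAddCommGroup H]
    [InnerProductSpace ℝ H] [CompleteSpace H] [TopologicalSpace.SeparableSpace H]
    (a : EuclideanSpace ℝ (Fin n) × ℝ → H) (ha : StronglyMeasurable a)
    (xB : EuclideanSpace ℝ (Fin n)) (rB : ℝ) (hrB : 0 < rB)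
    (hsupp : ∀ p ∉ tent n (Metric.ball xB rB), a p = 0)
    (hbound : (∫⁻ x in Metric.ball xB rB, ∫⁻ p in cone n x, (‖a p‖₊ : ℝ≥0∞) ^ 2 ∂muT n)
      ≤ 1 / volume (Metric.ball xB rB)) :
    (∫⁻ x, (∫⁻ p in cone n x, (‖a p‖₊ : ℝ≥0∞) ^ 2 ∂muT n) ^ (1/2 : ℝ)) ≤ 1 := by
  set B := Metric.ball xB rB with hB
  set g : EuclideanSpace ℝ (Fin n) → ℝ≥0∞ :=
    fun x => ∫⁻ p in cone n x, (‖a p‖₊ : ℝ≥0∞) ^ 2 ∂muT n with hg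
  have hconemeas : ∀ x, MeasurableSet (cone n x) := by
    intro x
    have : cone n x = {p : EuclideanSpace ℝ (Fin n) × ℝ | dist x p.1 < p.2} := rfl
    rw [this]
    exact measurableSet_lt ((continuous_dist.comp (Continuous.prodMk continuous_const
      (continuous_fst))).measurable) measurable_snd
  have hsfin : SFinite (muT n) := by unfold muT; infer_instance
  -- measurability of g
  have hgmeas : Measurable g := by
    have h1 : ∀ x, g x = ∫⁻ p, (cone n x).indicator
        (fun p => (‖a p‖₊ : ℝ≥0∞) ^ 2) p ∂muT n := by
      intro x
      rw [lintegral_indicator (hconemeas x)]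
    rw [show g = fun x => ∫⁻ p, (cone n x).indicator (fun p => (‖a p‖₊ : ℝ≥0∞) ^ 2) p ∂muT n from funext h1]
    apply Measurable.lintegral_prod_right (f := fun x p => (cone n x).indicator
      (fun p => (‖a p‖₊ : ℝ≥0∞) ^ 2) p)
    have heq : (Function.uncurry fun x p => (cone n x).indicator
        (fun p => (‖a p‖₊ : ℝ≥0∞) ^ 2) p) =
        {q : (EuclideanSpace ℝ (Fin n)) × (EuclideanSpace ℝ (Fin n) × ℝ) |
          dist q.1 q.2.1 < q.2.2}.indicator
          (fun q => (‖a q.2‖₊ : ℝ≥0∞) ^ 2) := by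
      funext q
      rfl
    rw [heq]
    apply Measurable.indicator
    · exact (((ha.nnnorm.measurable).comp measurable_snd).coe_nnreal_ennreal).pow measurable_const
    · exact measurableSet_lt
        ((continuous_dist.comp (Continuous.prodMk continuous_fst
          (continuous_fst.comp continuous_snd))).measurable)
        (measurable_snd.comp measurable_snd)
  -- g vanishes outside B
  have hgzero : ∀ x ∉ B, g x = 0 := by
    intro x hx
    have hz : ∀ p ∈ cone n x, (‖a p‖₊ : ℝ≥0∞) ^ 2 = 0 := by
      intro p hp
      have : a p = 0 := by
        apply hsupp
        intro hpt
        exact hx (hpt.2 hp)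
      simp [this]
    calc g x = ∫⁻ p in cone n x, 0 ∂muT n :=
          setLIntegral_congr_fun (hconemeas x) hz
      _ = 0 := lintegral_zero
  -- reduce to integral over B
  have hstep : (∫⁻ x, g x ^ (1/2 : ℝ)) = ∫⁻ x in B, g x ^ (1/2 : ℝ) := by
    have : ∀ x, g x ^ (1/2 : ℝ) = B.indicator (fun x => g x ^ (1/2 : ℝ)) x := by
      intro x
      by_cases hx : x ∈ B
      · rw [Set.indicator_of_mem hx]
      · rw [Set.indicator_of_notMem hx, hgzero x hx]
        simp
    rw [lintegral_congr this, lintegral_indicator measurableSet_ball _]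
  rw [hstep]
  have hvB : volume B ≠ 0 := by
    simp [hB, Metric.measure_ball_pos volume xB hrB |>.ne']
  have hvBfin : volume B ≠ ∞ := measure_ball_lt_top.ne
  -- Cauchy–Schwarz (Hölder with p = q = 2)
  have hpq : Real.HolderConjugate 2 2 := Real.HolderConjugate.two_two
  have hCS := ENNReal.lintegral_mul_le_Lp_mul_Lq (volume.restrict B) hpq
    (f := fun x => g x ^ (1/2 : ℝ)) (g := fun _ => 1)
    ((hgmeas.pow_const _).aemeasurable) aemeasurable_const
  simp only [Pi.mul_apply, mul_one] at hCS
  have hsimp : ∀ x, (g x ^ (1/2 : ℝ)) ^ (2 : ℝ) = g x := by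
    intro x
    rw [← ENNReal.rpow_mul]
    norm_num
  calc (∫⁻ x in B, g x ^ (1/2 : ℝ))
      ≤ (∫⁻ x in B, (g x ^ (1/2 : ℝ)) ^ (2 : ℝ)) ^ (1/2 : ℝ) *
        (∫⁻ x in B, (1 : ℝ≥0∞) ^ (2 : ℝ)) ^ (1/2 : ℝ) := hCS
    _ = (∫⁻ x in B, g x) ^ (1/2 : ℝ) * (volume B) ^ (1/2 : ℝ) := by
        simp_rw [hsimp]
        simp
    _ ≤ (1 / volume B) ^ (1/2 : ℝ) * (volume B) ^ (1/2 : ℝ) := by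
        exact mul_le_mul_left (ENNReal.rpow_le_rpow hbound (by norm_num)) _
    _ = ((1 / volume B) * volume B) ^ (1/2 : ℝ) := by
        rw [ENNReal.mul_rpow_of_ne_top _ hvBfin]
        simp [hvB]
    _ = 1 := by
        rw [one_div, ENNReal.inv_mul_cancel hvB hvBfin, ENNReal.one_rpow]
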